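/- Let ℓ be a prime and m ≥ 1, i ≥ 0 integers. Then the iterated wreath product D_{i,m} satisfies ℓ^((ℓ^i−1)/(ℓ−1)) · k(D_{i,m}) ≥ m^(ℓ^i), where (ℓ^i−1)/(ℓ−1) = 1 + ℓ + ⋯ + ℓ^{i−1}. -/

import Mathlib

/-- The shift automorphism of `ZMod n → H` by `c : ZMod n`: `(c • f) x = f (x - c)`. -/
def shiftAut (H : Type*) [Group H] (n : ℕ) (c : ZMod n) : MulAut (ZMod n → H) where
  toFun f := fun x => f (x - c)
  invFun f := fun x => f (x + c)
  left_inv f := funext fun x => by simp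
  right_inv f := funext fun x => by simp
  map_mul' f g := rfl

/-- The action of the cyclic group `C_n = Multiplicative (ZMod n)` on `ZMod n → H`
by shifting: `(c • f) x = f (x - c)`. -/
def wreathAction (H : Type*) [Group H] (n : ℕ) :
    Multiplicative (ZMod n) →* MulAut (ZMod n → H) where
  toFun c := shiftAut H n c.toAdd
  map_one' := by
    ext f x
    show f (x - (1 : Multiplicative (ZMod n)).toAdd) = f x
    rw [toAdd_one, sub_zero]
  map_mul' c d := by
    ext f x
    show f (x - (c.toAdd + d.toAdd)) = f (x - c.toAdd - d.toAdd)
    rw [sub_sub]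

/-- The wreath product `H ≀ C_n`: the semidirect product `(ZMod n → H) ⋊ C_n`,
where `c ∈ C_n = ZMod n` acts on `f : ZMod n → H` by `(c • f) x = f (x - c)`. -/
abbrev WreathCyclic (H : Type*) [Group H] (n : ℕ) : Type _ :=
  SemidirectProduct (ZMod n → H) (Multiplicative (ZMod n)) (wreathAction H n)

/-- The iterated wreath product `D_{i,m} = C_m ≀ C_ℓ ≀ ⋯ ≀ C_ℓ` (with `i` factors `C_ℓ`),
bundled together with its group structure. -/
noncomputable def iterWreathAux (ℓ m : ℕ) : ℕ → (T : Type) × Group T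
  | 0 => ⟨Multiplicative (ZMod m), inferInstance⟩
  | i + 1 =>
    let p := iterWreathAux ℓ m i
    letI : Group p.1 := p.2
    ⟨WreathCyclic p.1 ℓ, inferInstance⟩

/-- The iterated wreath product `D_{i,m} = C_m ≀ C_ℓ ≀ ⋯ ≀ C_ℓ` with `i` factors `C_ℓ`. -/
noncomputable def IterWreath (ℓ m i : ℕ) : Type := (iterWreathAux ℓ m i).1

noncomputable instance (ℓ m i : ℕ) : Group (IterWreath ℓ m i) := (iterWreathAux ℓ m i).2


open MulAction in
lemma card_le_index_mul_card_conjClasses {G : Type*} [Group G] [Finite G]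
    (A : Subgroup G) (hA : ∀ x ∈ A, ∀ y ∈ A, x * y = y * x) :
    Nat.card A ≤ A.index * Nat.card (ConjClasses G) := by
  classical
  cases nonempty_fintype G
  set f : A → ConjClasses G := fun a => ConjClasses.mk (a : G) with hf
  have hfib : ∀ a : A, Nat.card {b : A // f b = f a} ≤ A.index := by
    intro a
    have hinj : Function.Injective
        (fun b : {b : A // f b = f a} =>
          (⟨(b.1 : G), by
            rw [ConjAct.orbit_eq_carrier_conjClasses, ConjClasses.mem_carrier_iff_mk_eq]
            exact b.2⟩ : orbit (ConjAct G) (a : G))) := by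
      intro b c h
      exact Subtype.ext (Subtype.ext (Subtype.mk_eq_mk.mp h))
    have h1 := Nat.card_le_card_of_injective _ hinj
    have h2 : Nat.card {b : A // f b = f a} ≤
        (stabilizer (ConjAct G) (a : G)).index := by
      rw [index_stabilizer, ← Nat.card_coe_set_eq]
      exact h1
    have hle : A.map (ConjAct.toConjAct : G ≃* ConjAct G).toMonoidHom ≤ stabilizer (ConjAct G) (a : G) := by
      rintro x ⟨y, hy, rfl⟩
      show ConjAct.toConjAct y • (a : G) = (a : G)
      rw [ConjAct.toConjAct_smul]
      have := hA y hy a a.2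
      rw [this, mul_inv_cancel_right]
    have hdvd : (stabilizer (ConjAct G) (a : G)).index ∣
        (A.map (ConjAct.toConjAct : G ≃* ConjAct G).toMonoidHom).index := Subgroup.index_dvd_of_le hle
    have hmapidx : (A.map (ConjAct.toConjAct : G ≃* ConjAct G).toMonoidHom).index = A.index := by
      rw [Subgroup.index_map_of_injective _ ConjAct.toConjAct.injective,
        MonoidHom.range_eq_top_of_surjective _ ConjAct.toConjAct.surjective,
        Subgroup.index_top, mul_one]
    have hpos : (A.map (ConjAct.toConjAct : G ≃* ConjAct G).toMonoidHom).index ≠ 0 :=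
      Subgroup.index_ne_zero_of_finite
    have h3 : (stabilizer (ConjAct G) (a : G)).index ≤ A.index := by
      rw [← hmapidx]
      exact Nat.le_of_dvd (Nat.pos_of_ne_zero hpos) hdvd
    exact h2.trans h3
  calc Nat.card A = (Finset.univ : Finset A).card := by
        simp [Nat.card_eq_fintype_card]
    _ ≤ A.index * (Finset.univ.image f).card := by
        apply Finset.card_le_mul_card_image
        intro c hc
        obtain ⟨a, -, ha⟩ := Finset.mem_image.mp hc
        subst ha
        have : {b ∈ (Finset.univ : Finset A) | f b = f a}.card = Nat.card {b : A // f b = f a} := by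
          conv_rhs => rw [Nat.card_eq_fintype_card]
          rw [Fintype.card_subtype]
        rw [this]
        exact hfib a
    _ ≤ A.index * Nat.card (ConjClasses G) := by
        gcongr
        rw [Nat.card_eq_fintype_card]
        exact Finset.card_le_univ _

/-- Underlying equivalence of a semidirect product with the product type. -/
def sdpEquiv {N G : Type*} [Group N] [Group G] (φ : G →* MulAut N) :
    SemidirectProduct N G φ ≃ N × G where
  toFun g := (g.left, g.right)
  invFun p := ⟨p.1, p.2⟩
  left_inv g := rfl
  right_inv p := rfl

lemma card_sdp {N G : Type*} [Group N] [Group G] (φ : G →* MulAut N) :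
    Nat.card (SemidirectProduct N G φ) = Nat.card N * Nat.card G := by
  rw [Nat.card_congr (sdpEquiv φ), Nat.card_prod]

/-- Equivalence between the pi subgroup and the pi type of subgroups. -/
def piSubgroupEquiv {η : Type*} {G : η → Type*} [∀ i, Group (G i)]
    (A : ∀ i, Subgroup (G i)) :
    (Subgroup.pi Set.univ A) ≃ (∀ i, A i) where
  toFun f := fun i => ⟨f.1 i, f.2 i (Set.mem_univ i)⟩
  invFun f := ⟨fun i => f i, fun i _ => (f i).2⟩
  left_inv f := rfl
  right_inv f := rfl

lemma geom_aux {ℓ : ℕ} (hℓ : 2 ≤ ℓ) (i : ℕ) :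
    (ℓ - 1) * ∑ j ∈ Finset.range i, ℓ ^ j = ℓ ^ i - 1 := by
  induction i with
  | zero => simp
  | succ i ih =>
    rw [Finset.sum_range_succ, mul_add, ih, pow_succ]
    have h1 : 1 ≤ ℓ ^ i := Nat.one_le_pow _ _ (by omega)
    have h2 : (ℓ - 1) * ℓ ^ i = ℓ * ℓ ^ i - ℓ ^ i := by
      rw [Nat.sub_mul, one_mul]
    have h3 : ℓ ^ i ≤ ℓ * ℓ ^ i := Nat.le_mul_of_pos_left _ (by omega)
    rw [h2, mul_comm (ℓ ^ i) ℓ]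
    set Y := ℓ * ℓ ^ i
    omega

lemma exists_abelian_subgroup (ℓ : ℕ) (hℓ : 1 ≤ ℓ) (m : ℕ) (hm : 1 ≤ m) (i : ℕ) :
    ∃ A : Subgroup (IterWreath ℓ m i),
      (∀ x ∈ A, ∀ y ∈ A, x * y = y * x) ∧ Nat.card A = m ^ ℓ ^ i ∧
      Nat.card (IterWreath ℓ m i) = m ^ ℓ ^ i * ℓ ^ (∑ j ∈ Finset.range i, ℓ ^ j) := by
  induction i with
  | zero =>
    refine ⟨⊤, ?_, ?_, ?_⟩
    · intro x _ y _
      exact mul_comm (G := Multiplicative (ZMod m)) x y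
    · rw [Subgroup.card_top]
      show Nat.card (Multiplicative (ZMod m)) = m ^ ℓ ^ 0
      rw [pow_zero, pow_one, Nat.card_congr Multiplicative.toAdd, Nat.card_zmod]
    · show Nat.card (Multiplicative (ZMod m)) = m ^ ℓ ^ 0 * ℓ ^ (∑ j ∈ Finset.range 0, ℓ ^ j)
      rw [pow_zero, pow_one, Nat.card_congr Multiplicative.toAdd, Nat.card_zmod]
      simp
  | succ i ih =>
    obtain ⟨A, hcomm, hcardA, hcardG⟩ := ih
    haveI : NeZero ℓ := ⟨by omega⟩
    set G0 := IterWreath ℓ m i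
    refine ⟨((Subgroup.pi Set.univ fun _ : ZMod ℓ => A).map
        (SemidirectProduct.inl (φ := wreathAction G0 ℓ)) :
        Subgroup (IterWreath ℓ m (i + 1))), ?_, ?_, ?_⟩
    · rintro x ⟨f, hf, rfl⟩ y ⟨g, hg, rfl⟩
      show (SemidirectProduct.inl (φ := wreathAction G0 ℓ) f : WreathCyclic G0 ℓ) *
          SemidirectProduct.inl (φ := wreathAction G0 ℓ) g =
        (SemidirectProduct.inl (φ := wreathAction G0 ℓ) g : WreathCyclic G0 ℓ) *
          SemidirectProduct.inl (φ := wreathAction G0 ℓ) f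
      rw [← map_mul, ← map_mul]
      congr 1
      funext z
      exact hcomm (f z) (hf z (Set.mem_univ z)) (g z) (hg z (Set.mem_univ z))
    · refine Eq.trans (Nat.card_congr ((Subgroup.pi Set.univ fun _ : ZMod ℓ => A).equivMapOfInjective
        _ SemidirectProduct.inl_injective).toEquiv.symm) ?_
      rw [Nat.card_congr (piSubgroupEquiv fun _ : ZMod ℓ => A), Nat.card_fun,
        Nat.card_zmod, hcardA, ← pow_mul, ← pow_succ]
    · show Nat.card (SemidirectProduct (ZMod ℓ → G0) (Multiplicative (ZMod ℓ))
        (wreathAction G0 ℓ)) = _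
      rw [card_sdp, Nat.card_fun, Nat.card_zmod,
        Nat.card_congr Multiplicative.toAdd, Nat.card_zmod, hcardG, geom_sum_succ,
        mul_pow, ← pow_mul, ← pow_mul, ← pow_succ, mul_comm ℓ (∑ j ∈ Finset.range i, ℓ ^ j),
        pow_succ ℓ i, mul_assoc]
      ring

theorem card_conjClasses_iterWreath (ℓ : ℕ) (hℓ : ℓ.Prime) (m : ℕ) (hm : 1 ≤ m) (i : ℕ) :
    m ^ ℓ ^ i ≤ ℓ ^ ((ℓ ^ i - 1) / (ℓ - 1)) * Nat.card (ConjClasses (IterWreath ℓ m i)) := by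
  have hℓ2 : 2 ≤ ℓ := hℓ.two_le
  obtain ⟨A, hcomm, hcardA, hcardG⟩ := exists_abelian_subgroup ℓ (by omega) m hm i
  have hdiv : (ℓ ^ i - 1) / (ℓ - 1) = ∑ j ∈ Finset.range i, ℓ ^ j := by
    rw [← geom_aux hℓ2 i, Nat.mul_div_cancel_left _ (by omega : 0 < ℓ - 1)]
  have hGpos : 0 < Nat.card (IterWreath ℓ m i) := by
    rw [hcardG]
    positivity
  haveI : Finite (IterWreath ℓ m i) := (Nat.card_pos_iff.mp hGpos).2
  have hidx : A.index = ℓ ^ (∑ j ∈ Finset.range i, ℓ ^ j) := by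
    have h := Subgroup.card_mul_index A
    rw [hcardA, hcardG] at h
    have hmpos : 0 < m ^ ℓ ^ i := by positivity
    exact Nat.eq_of_mul_eq_mul_left hmpos h
  have key := card_le_index_mul_card_conjClasses A hcomm
  rw [hcardA, hidx] at key
  rw [hdiv]
  exact key
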